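/- Let G be a connected finite simple graph with at least 3 vertices and let T_1, …, T_k (k ≥ 2) be spanning trees of G whose inner-vertex sets I(T_1), …, I(T_k) are pairwise disjoint. If u and v are distinct non-adjacent vertices of G, then for all 1 ≤ i < j ≤ k, the unique path between u and v in T_i and the unique path between u and v in T_j have no common vertex other than u and v, and have no common edge. -/
import Mathlib


open SimpleGraph

variable {V : Type*}

/-- `T` is a spanning tree of `G`: a subgraph on all of `V` that is connected and acyclic. -/
def IsSpanningTree (G T : SimpleGraph V) : Prop :=
  T ≤ G ∧ T.Connected ∧ T.IsAcyclic

/-- The set of inner vertices of `T` (degree at least 2). -/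
def innerSet (T : SimpleGraph V) : Set V :=
  {v | 2 ≤ (T.neighborSet v).ncard}

/-- Vertices that are inner vertices of at least two trees of the family. -/
def innerMulti {k : ℕ} (T : Fin k → SimpleGraph V) : Set V :=
  {v | ∃ i j : Fin k, i ≠ j ∧ v ∈ innerSet (T i) ∧ v ∈ innerSet (T j)}

/-- Edges that belong to at least two trees of the family. -/
def edgeMulti {k : ℕ} (T : Fin k → SimpleGraph V) : Set (Sym2 V) :=
  {e | ∃ i j : Fin k, i ≠ j ∧ e ∈ (T i).edgeSet ∧ e ∈ (T j).edgeSet}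

/-- A connected dominating set. -/
def IsConnDomSet (G : SimpleGraph V) (D : Set V) : Prop :=
  (G.induce D).Connected ∧ ∀ v ∉ D, ∃ w ∈ D, G.Adj v w


lemma auxInnerSet_eq (T : SimpleGraph V) : innerSet T = {v | 2 ≤ (T.neighborSet v).ncard} := rfl

lemma internal_mem_inner [Fintype V] {T : SimpleGraph V} :
    ∀ {u v : V} (p : T.Walk u v), p.IsPath → ∀ {x : V}, x ∈ p.support → x ≠ u → x ≠ v →
    x ∈ innerSet T := by
  intro u v p
  induction p with
  | nil => intro _ x hx hxu _; simp at hx; exact absurd hx hxu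
  | @cons a b c h p' ih =>
    intro hp x hx hxu hxv
    rw [SimpleGraph.Walk.support_cons] at hx
    rcases List.mem_cons.1 hx with rfl | hx'
    · exact absurd rfl hxu
    by_cases hxb : x = b
    · subst hxb
      cases p' with
      | nil => exact absurd rfl hxv
      | @cons _ y _ h2 p'' =>
        have hne : a ≠ y := by
          have hnd := hp.support_nodup
          simp [SimpleGraph.Walk.support_cons] at hnd
          intro hay
          apply hnd.1.2
          rw [hay]
          exact SimpleGraph.Walk.start_mem_support p''
        have : 1 < (T.neighborSet x).ncard := by
          rw [Set.one_lt_ncard (Set.toFinite _)]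
          exact ⟨a, h.symm, y, h2, hne⟩
        exact this
    · exact ih hp.of_cons hx' hxb hxv

/-- For non-adjacent vertices `u, v`, the unique `u`-`v` paths in two of the trees
share no vertex other than `u` and `v`, and share no edge. -/
theorem paths_internally_disjoint [Fintype V] (G : SimpleGraph V) (hG : G.Connected)
    (hV : 3 ≤ Fintype.card V) (k : ℕ) (hk : 2 ≤ k)
    (T : Fin k → SimpleGraph V) (hT : ∀ m, IsSpanningTree G (T m))
    (hdisj : ∀ m m' : Fin k, m ≠ m' → Disjoint (innerSet (T m)) (innerSet (T m')))
    (u v : V) (huv : u ≠ v) (hadj : ¬ G.Adj u v)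
    (i j : Fin k) (hij : i < j)
    (p : (T i).Walk u v) (hp : p.IsPath) (q : (T j).Walk u v) (hq : q.IsPath) :
    (∀ x : V, x ∈ p.support → x ∈ q.support → x = u ∨ x = v) ∧
    (∀ e : Sym2 V, e ∈ p.edges → e ∉ q.edges) := by
  have hne : i ≠ j := Fin.ne_of_lt hij
  have part1 : ∀ x : V, x ∈ p.support → x ∈ q.support → x = u ∨ x = v := by
    intro x hxp hxq
    by_contra hcon
    push_neg at hcon
    have h1 : x ∈ innerSet (T i) := internal_mem_inner p hp hxp hcon.1 hcon.2
    have h2 : x ∈ innerSet (T j) := internal_mem_inner q hq hxq hcon.1 hcon.2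
    exact Set.disjoint_left.1 (hdisj i j hne) h1 h2
  refine ⟨part1, ?_⟩
  intro e hep heq
  induction e using Sym2.ind with
  | _ a b =>
    have hadji : (T i).Adj a b := p.edges_subset_edgeSet hep
    have ha : a = u ∨ a = v :=
      part1 a (SimpleGraph.Walk.fst_mem_support_of_mem_edges p hep)
        (SimpleGraph.Walk.fst_mem_support_of_mem_edges q heq)
    have hb : b = u ∨ b = v :=
      part1 b (SimpleGraph.Walk.snd_mem_support_of_mem_edges p hep)
        (SimpleGraph.Walk.snd_mem_support_of_mem_edges q heq)
    have hle : (T i) ≤ G := (hT i).1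
    rcases ha with rfl | rfl <;> rcases hb with rfl | rfl
    · exact hadji.ne rfl
    · exact hadj (hle hadji)
    · exact hadj (hle hadji.symm)
    · exact hadji.ne rfl
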